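/- With the construction parameters as above (r ≥ 2, 0 < λ < 1/r³, 0 < δ < λ/r, d = ⌊δN⌋, l = ⌊λN⌋, D ⊆ {1,...,d}), suppose b_0, ..., b_{r-1} are elements with b_i ∈ D_{c_i} for indices c_i ∈ {0,...,r−1} (with multiplicities t_j = |{i : c_i = j}|), and suppose Σ_{i=0}^{r-1} b_i = C(r,2)·l + r·z for some z ∈ D. Then Σ_{j=0}^{r-1} j·t_j = C(r,2). -/

import Mathlib

/-- If `bᵢ ∈ D_{cᵢ}` with `cᵢ ∈ {0,…,r-1}` and `∑ bᵢ = C(r,2)·l + r·z` for some `z ∈ D`,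
then `∑ⱼ j·tⱼ = C(r,2)` where `tⱼ = #{i : cᵢ = j}`. -/
theorem statement9 (N r : ℕ) (hN : 0 < N) (hr : 2 ≤ r) (lam del : ℝ)
    (hlam0 : 0 < lam) (hlam1 : lam < 1 / (r : ℝ) ^ 3)
    (hdel0 : 0 < del) (hdel1 : del < lam / r)
    (d l : ℕ) (hd : d = ⌊del * N⌋₊) (hl : l = ⌊lam * N⌋₊)
    (D : Finset ℕ) (hD : D ⊆ Finset.Icc 1 d)
    (b c : Fin r → ℕ) (hc : ∀ i, c i < r)
    (hb : ∀ i, ∃ x ∈ D, b i = c i * l + x)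
    (z : ℕ) (hz : z ∈ D)
    (hsum : (∑ i, b i) = r.choose 2 * l + r * z) :
    (∑ j ∈ Finset.range r, j * (Finset.univ.filter fun i => c i = j).card) = r.choose 2 := by
  choose x hxD hbx using hb
  have hxb : ∀ i, 1 ≤ x i ∧ x i ≤ d := by
    intro i
    have := hD (hxD i)
    simpa [Finset.mem_Icc] using this
  have hzb : 1 ≤ z ∧ z ≤ d := by simpa [Finset.mem_Icc] using hD hz
  -- d ≥ 1, hence del*N ≥ 1
  have hd1 : 1 ≤ d := hzb.1.trans hzb.2
  have hdN : (1 : ℝ) ≤ del * N := by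
    have := Nat.le_floor_iff (by positivity : (0:ℝ) ≤ del * N) |>.mp (hd ▸ hd1)
    simpa using this
  have hrd : (r : ℝ) * del < lam := by
    have h0 : (0:ℝ) < r := by positivity
    have := (lt_div_iff₀ h0).mp hdel1
    linarith
  -- r * d ≤ l
  have hrdl : r * d ≤ l := by
    rw [hl]
    apply Nat.le_floor
    push_cast
    have hdle : (d : ℝ) ≤ del * N := by
      rw [hd]; exact Nat.floor_le (by positivity)
    calc (r : ℝ) * d ≤ r * (del * N) := by
          apply mul_le_mul_of_nonneg_left hdle (by positivity)
      _ = (r * del) * N := by ring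
      _ ≤ lam * N := by
          apply mul_le_mul_of_nonneg_right (le_of_lt hrd) (by positivity)
  -- l ≥ r
  have hlr : r ≤ l := by
    rw [hl]
    apply Nat.le_floor
    calc (r : ℝ) = r * 1 := by ring
      _ ≤ r * (del * N) := by
          apply mul_le_mul_of_nonneg_left hdN (by positivity)
      _ = (r * del) * N := by ring
      _ ≤ lam * N := mul_le_mul_of_nonneg_right (le_of_lt hrd) (by positivity)
  set A := ∑ i, c i with hA
  set S := ∑ i, x i with hS
  have hsum' : A * l + S = r.choose 2 * l + r * z := by
    rw [← hsum]
    rw [Finset.sum_congr rfl (fun i _ => hbx i), Finset.sum_add_distrib,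
      ← Finset.sum_mul]
  have hSlb : r ≤ S := by
    calc r = ∑ _i : Fin r, 1 := by simp
      _ ≤ S := Finset.sum_le_sum (fun i _ => (hxb i).1)
  have hSub : S ≤ r * d := by
    calc S ≤ ∑ _i : Fin r, d := Finset.sum_le_sum (fun i _ => (hxb i).2)
      _ = r * d := by simp [Finset.sum_const, mul_comm]
  have hzub : r * z ≤ r * d := Nat.mul_le_mul_left r hzb.2
  have hzlb : r ≤ r * z := Nat.le_mul_of_pos_right r (by omega)
  -- conclude A = choose
  have hAC : A = r.choose 2 := by
    rcases Nat.lt_trichotomy A (r.choose 2) with h | h | h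
    · exfalso
      have : (A + 1) * l ≤ r.choose 2 * l := Nat.mul_le_mul_right l h
      have hl2 : 2 ≤ l := le_trans hr hlr
      nlinarith [this, hsum', hSub, hrdl, hzlb]
    · exact h
    · exfalso
      have : (r.choose 2 + 1) * l ≤ A * l := Nat.mul_le_mul_right l h
      nlinarith [this, hsum', hSlb, hrdl, hzub, hlr, hr]
  rw [← hAC, hA]
  rw [← Finset.sum_fiberwise_of_maps_to (g := fun i => c i)
    (fun i _ => Finset.mem_range.mpr (hc i))]
  apply Finset.sum_congr rfl
  intro j _
  rw [Finset.sum_congr rfl (fun i hi => (Finset.mem_filter.mp hi).2),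
    Finset.sum_const, smul_eq_mul, mul_comm]
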